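/- The operators D₁ and D₂ are symmetric with respect to W, and the adjoint of D₃ is (p/(n−p))·D₄: for all 2×2 complex matrix valued polynomials P and Q, ⟨P·D₁, Q⟩ = ⟨P, Q·D₁⟩, ⟨P·D₂, Q⟩ = ⟨P, Q·D₂⟩, and (n−p)·⟨P·D₃, Q⟩ = p·⟨P, Q·D₄⟩. -/

import Mathlib

open scoped BigOperators Matrix

noncomputable section

/-- Gegenbauer polynomials `C_k^lam` with natural number index, defined by the
three-term recurrence. -/
def Geg (lam : ℝ) : ℕ → ℝ → ℝ
  | 0 => fun _ => 1
  | 1 => fun x => 2 * lam * x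
  | (k + 2) => fun x =>
      (2 * ((k : ℝ) + 2 + lam - 1) * x * Geg lam (k + 1) x
        - ((k : ℝ) + 2 + 2 * lam - 2) * Geg lam k x) / ((k : ℝ) + 2)

/-- Gegenbauer polynomials with integer index, equal to `0` for negative index. -/
def GegZ (lam : ℝ) (k : ℤ) (x : ℝ) : ℝ :=
  if k < 0 then 0 else Geg lam k.toNat x

/-- The 2×2 matrix valued polynomials `P_w`. -/
def Pw (p n : ℝ) (w : ℕ) (x : ℝ) : Matrix (Fin 2) (Fin 2) ℂ :=
  !![(((1 / (n + 1)) * GegZ ((n + 1) / 2) (w : ℤ) x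
        + (1 / (p + w)) * GegZ ((n + 3) / 2) ((w : ℤ) - 2) x : ℝ) : ℂ),
     (((1 / (p + w)) * GegZ ((n + 3) / 2) ((w : ℤ) - 1) x : ℝ) : ℂ);
     (((1 / (n - p + w)) * GegZ ((n + 3) / 2) ((w : ℤ) - 1) x : ℝ) : ℂ),
     (((1 / (n + 1)) * GegZ ((n + 1) / 2) (w : ℤ) x
        + (1 / (n - p + w)) * GegZ ((n + 3) / 2) ((w : ℤ) - 2) x : ℝ) : ℂ)]

/-- The weight matrix `W_{p,n}` on `(-1,1)`. -/
def Wmat (p n : ℝ) (x : ℝ) : Matrix (Fin 2) (Fin 2) ℂ :=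
  (((1 - x ^ 2) ^ (n / 2 - 1) : ℝ) : ℂ) •
    !![((p * x ^ 2 + n - p : ℝ) : ℂ), ((-(n * x) : ℝ) : ℂ);
       ((-(n * x) : ℝ) : ℂ), (((n - p) * x ^ 2 + p : ℝ) : ℂ)]

/-- Entrywise derivative of a matrix valued function. -/
def mderiv (P : ℝ → Matrix (Fin 2) (Fin 2) ℂ) : ℝ → Matrix (Fin 2) (Fin 2) ℂ :=
  fun x => Matrix.of fun i j => deriv (fun t => P t i j) x

/-- The matrix valued inner product `⟨P,Q⟩ = ∫_{-1}^{1} P(x) W(x) Q(x)^* dx`. -/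
def mint (p n : ℝ) (P Q : ℝ → Matrix (Fin 2) (Fin 2) ℂ) : Matrix (Fin 2) (Fin 2) ℂ :=
  Matrix.of fun i j => ∫ x in (-1 : ℝ)..1, (P x * Wmat p n x * (Q x)ᴴ) i j

/-- A matrix valued function is polynomial if each entry is given by a polynomial. -/
def IsPolyMat (P : ℝ → Matrix (Fin 2) (Fin 2) ℂ) : Prop :=
  ∀ i j, ∃ q : Polynomial ℂ, ∀ x : ℝ, P x i j = q.eval (x : ℂ)


/-- The right-acting differential operator `D₁`. -/
def actD1 (p n : ℝ) (P : ℝ → Matrix (Fin 2) (Fin 2) ℂ) (x : ℝ) :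
    Matrix (Fin 2) (Fin 2) ℂ :=
  mderiv (mderiv P) x * !![(x : ℂ) ^ 2, (x : ℂ); -(x : ℂ), -1]
    + mderiv P x * !![((n : ℂ) + 2) * (x : ℂ), (n : ℂ) - (p : ℂ) + 2; -(p : ℂ), 0]
    + P x * !![(p : ℂ) * ((n : ℂ) - (p : ℂ) + 1), 0; 0, 0]

/-- The right-acting differential operator `D₂`. -/
def actD2 (p n : ℝ) (P : ℝ → Matrix (Fin 2) (Fin 2) ℂ) (x : ℝ) :
    Matrix (Fin 2) (Fin 2) ℂ :=
  mderiv (mderiv P) x * !![-1, -(x : ℂ); (x : ℂ), (x : ℂ) ^ 2]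
    + mderiv P x * !![0, (p : ℂ) - (n : ℂ); (p : ℂ) + 2, ((n : ℂ) + 2) * (x : ℂ)]
    + P x * !![0, 0; 0, ((p : ℂ) + 1) * ((n : ℂ) - (p : ℂ))]

/-- The right-acting differential operator `D₃`. -/
def actD3 (p n : ℝ) (P : ℝ → Matrix (Fin 2) (Fin 2) ℂ) (x : ℝ) :
    Matrix (Fin 2) (Fin 2) ℂ :=
  mderiv (mderiv P) x * !![-(x : ℂ), -1; (x : ℂ) ^ 2, (x : ℂ)]
    + mderiv P x * !![-(p : ℂ), 0; 2 * ((p : ℂ) + 1) * (x : ℂ), (p : ℂ) + 2]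
    + P x * !![0, 0; (p : ℂ) * ((p : ℂ) + 1), 0]

/-- The right-acting differential operator `D₄`. -/
def actD4 (p n : ℝ) (P : ℝ → Matrix (Fin 2) (Fin 2) ℂ) (x : ℝ) :
    Matrix (Fin 2) (Fin 2) ℂ :=
  mderiv (mderiv P) x * !![(x : ℂ), (x : ℂ) ^ 2; -1, -(x : ℂ)]
    + mderiv P x * !![(n : ℂ) - (p : ℂ) + 2, 2 * ((n : ℂ) - (p : ℂ) + 1) * (x : ℂ);
                      0, (p : ℂ) - (n : ℂ)]
    + P x * !![0, ((n : ℂ) - (p : ℂ)) * ((n : ℂ) - (p : ℂ) + 1); 0, 0]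


namespace S18

open Polynomial MeasureTheory Set intervalIntegral

abbrev MP := Matrix (Fin 2) (Fin 2) (Polynomial ℂ)
def dM (A : MP) : MP := A.map (fun q => derivative q)
def evC (A : MP) (x : ℝ) : Matrix (Fin 2) (Fin 2) ℂ := A.map (fun q => q.eval (x:ℂ))
def cM (A : MP) : MP := Matrix.of fun i j => (A j i).map (starRingEnd ℂ)

lemma evC_apply (A : MP) (x : ℝ) (i j : Fin 2) : evC A x i j = (A i j).eval (x:ℂ) := rfl

lemma evC_mul (A B : MP) (x : ℝ) : evC (A * B) x = evC A x * evC B x := by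
  simp only [evC, ← Polynomial.coe_evalRingHom, Matrix.map_mul]

lemma evC_add (A B : MP) (x : ℝ) : evC (A + B) x = evC A x + evC B x := by
  refine Matrix.ext fun i j => ?_; simp [evC, Matrix.map_apply]

lemma conj_eval (q : Polynomial ℂ) (x : ℝ) :
    (starRingEnd ℂ) (q.eval (x:ℂ)) = (q.map (starRingEnd ℂ)).eval (x:ℂ) := by
  rw [Polynomial.eval_map]
  conv_rhs => rw [← Complex.conj_ofReal x]
  rw [Polynomial.eval₂_hom]

lemma evC_conjT (A : MP) (x : ℝ) : (evC A x)ᴴ = evC (cM A) x := by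
  refine Matrix.ext fun i j => ?_
  simp [evC, cM, Matrix.conjTranspose_apply, Matrix.map_apply, conj_eval]

lemma cM_add (A B : MP) : cM (A + B) = cM A + cM B := by
  refine Matrix.ext fun i j => ?_; simp [cM, Polynomial.map_add]

lemma cM_mul (A B : MP) : cM (A * B) = cM B * cM A := by
  refine Matrix.ext fun i j => ?_
  simp only [cM, Matrix.mul_apply, Fin.sum_univ_two, Matrix.of_apply, Polynomial.map_add,
    Polynomial.map_mul]
  ring

lemma cM_dM (A : MP) : cM (dM A) = dM (cM A) := by
  refine Matrix.ext fun i j => ?_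
  simp [cM, dM, Matrix.map_apply, Polynomial.derivative_map]

def algD (F2 F1 F0 A : MP) : MP := dM (dM A) * F2 + dM A * F1 + A * F0
def adjD (F2 F1 F0 B : MP) : MP := cM F2 * dM (dM B) + cM F1 * dM B + cM F0 * B

lemma cM_algD (F2 F1 F0 B : MP) : cM (algD F2 F1 F0 B) = adjD F2 F1 F0 (cM B) := by
  simp [algD, adjD, cM_add, cM_mul, cM_dM]

def pM (p n : ℝ) : MP :=
  !![C ((p:ℂ)) * X^2 + C (((n-p:ℝ)):ℂ), -(C ((n:ℂ)) * X);
     -(C ((n:ℂ)) * X), C (((n-p:ℝ)):ℂ) * X^2 + C ((p:ℂ))]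

def F2a : MP := !![X^2, X; -X, -1]
def F1a (p n : ℝ) : MP :=
  !![(C ((n:ℂ)) + 2) * X, C (((n-p+2:ℝ)):ℂ); -(C ((p:ℂ))), 0]
def F0a (p n : ℝ) : MP := !![C (((p*(n-p+1):ℝ)):ℂ), 0; 0, 0]

def F2b : MP := !![-1, -X; X, X^2]
def F1b (p n : ℝ) : MP :=
  !![0, C (((p-n:ℝ)):ℂ); C (((p+2:ℝ)):ℂ), (C ((n:ℂ)) + 2) * X]
def F0b (p n : ℝ) : MP := !![0, 0; 0, C ((((p+1)*(n-p):ℝ)):ℂ)]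

def F2c : MP := !![-X, -1; X^2, X]
def F1c (p : ℝ) : MP :=
  !![-(C ((p:ℂ))), 0; C (((2*(p+1):ℝ)):ℂ) * X, C (((p+2:ℝ)):ℂ)]
def F0c (p : ℝ) : MP := !![0, 0; C (((p*(p+1):ℝ)):ℂ), 0]

def F2d : MP := !![X, X^2; -1, -X]
def F1d (p n : ℝ) : MP :=
  !![C (((n-p+2:ℝ)):ℂ), C (((2*(n-p+1):ℝ)):ℂ) * X; 0, C (((p-n:ℝ)):ℂ)]
def F0d (p n : ℝ) : MP := !![0, C ((((n-p)*(n-p+1):ℝ)):ℂ); 0, 0]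

def U1 (p : ℝ) : MP :=
  !![-(C ((p:ℂ)) * X^2), C ((p:ℂ)) * X; C ((p:ℂ)) * X, -(C ((p:ℂ)))]
def V1 (p n : ℝ) : MP :=
  !![0, C (((p*(n-p+1):ℝ)):ℂ); -(C (((p*(n-p+1):ℝ)):ℂ)), 0]

def U2 (p n : ℝ) : MP :=
  !![-(C (((n-p:ℝ)):ℂ)), C (((n-p:ℝ)):ℂ) * X;
     C (((n-p:ℝ)):ℂ) * X, -(C (((n-p:ℝ)):ℂ) * X^2)]
def V2 (p n : ℝ) : MP :=
  !![0, -(C ((((n-p)*(p+1):ℝ)):ℂ)); C ((((n-p)*(p+1):ℝ)):ℂ), 0]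

def U3 (p n : ℝ) : MP :=
  !![C (((p*(n-p):ℝ)):ℂ) * X, -(C (((p*(n-p):ℝ)):ℂ));
     -(C (((p*(n-p):ℝ)):ℂ) * X^2), C (((p*(n-p):ℝ)):ℂ) * X]
def V3 (p n : ℝ) : MP :=
  !![-(C (((p*(n-p)*(n-p+1):ℝ)):ℂ)), 0;
     C (((p*(n-p)*(n-2*p):ℝ)):ℂ) * X, C (((p*(n-p)*(p+1):ℝ)):ℂ)]

def Tm (U V A B : MP) : MP := dM A * U * B + A * V * B - A * U * dM B

set_option maxHeartbeats 3000000 in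
lemma key1 (p n : ℝ) (A B : MP) :
    algD F2a (F1a p n) (F0a p n) A * pM p n * B
      - A * pM p n * adjD F2a (F1a p n) (F0a p n) B
    = (-(C ((n:ℂ)) * X)) • Tm (U1 p) (V1 p n) A B
        + (((1:Polynomial ℂ)) - X^2) • dM (Tm (U1 p) (V1 p n) A B) := by
  refine Matrix.ext (fun i j => ?_)
  fin_cases i <;> fin_cases j <;>
    · simp only [algD, adjD, Tm, U1, V1, F2a, F1a, F0a, pM, cM, dM,
        Matrix.mul_apply, Matrix.sub_apply, Matrix.add_apply, Matrix.smul_apply,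
        Matrix.map_apply, Matrix.of_apply, Fin.sum_univ_two,
        Matrix.cons_val', Matrix.cons_val_zero, Matrix.cons_val_one,
        Matrix.head_cons, Matrix.head_fin_const, Matrix.empty_val',
        Matrix.cons_val_fin_one,
        Polynomial.map_add, Polynomial.map_mul, Polynomial.map_neg,
        Polynomial.map_pow, Polynomial.map_X, Polynomial.map_C,
        Polynomial.map_one, Polynomial.map_zero, Polynomial.map_ofNat,
        Complex.conj_ofReal, Complex.ofReal_sub, Complex.ofReal_add,
        Complex.ofReal_mul, Complex.ofReal_ofNat, Complex.ofReal_one,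
        Complex.ofReal_pow, Complex.ofReal_neg, Polynomial.map_sub,
        derivative_mul, derivative_add, derivative_sub, derivative_neg,
        derivative_C, derivative_X, derivative_X_pow, derivative_one,
        derivative_ofNat, map_zero, map_one, smul_eq_mul,
        map_add, map_sub, map_mul, map_neg, map_pow, map_ofNat,
        map_natCast, Nat.cast_ofNat, Nat.cast_one]
      push_cast
      ring

set_option maxHeartbeats 3000000 in
lemma key2 (p n : ℝ) (A B : MP) :
    algD F2b (F1b p n) (F0b p n) A * pM p n * B
      - A * pM p n * adjD F2b (F1b p n) (F0b p n) B
    = (-(C ((n:ℂ)) * X)) • Tm (U2 p n) (V2 p n) A B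
        + (((1:Polynomial ℂ)) - X^2) • dM (Tm (U2 p n) (V2 p n) A B) := by
  refine Matrix.ext (fun i j => ?_)
  fin_cases i <;> fin_cases j <;>
    · simp only [algD, adjD, Tm, U2, V2, F2b, F1b, F0b, pM, cM, dM,
        Matrix.mul_apply, Matrix.sub_apply, Matrix.add_apply, Matrix.smul_apply,
        Matrix.map_apply, Matrix.of_apply, Fin.sum_univ_two,
        Matrix.cons_val', Matrix.cons_val_zero, Matrix.cons_val_one,
        Matrix.head_cons, Matrix.head_fin_const, Matrix.empty_val',
        Matrix.cons_val_fin_one,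
        Polynomial.map_add, Polynomial.map_mul, Polynomial.map_neg,
        Polynomial.map_pow, Polynomial.map_X, Polynomial.map_C,
        Polynomial.map_one, Polynomial.map_zero, Polynomial.map_ofNat,
        Complex.conj_ofReal, Complex.ofReal_sub, Complex.ofReal_add,
        Complex.ofReal_mul, Complex.ofReal_ofNat, Complex.ofReal_one,
        Complex.ofReal_pow, Complex.ofReal_neg, Polynomial.map_sub,
        derivative_mul, derivative_add, derivative_sub, derivative_neg,
        derivative_C, derivative_X, derivative_X_pow, derivative_one,
        derivative_ofNat, map_zero, map_one, smul_eq_mul,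
        map_add, map_sub, map_mul, map_neg, map_pow, map_ofNat,
        map_natCast, Nat.cast_ofNat, Nat.cast_one]
      push_cast
      ring

set_option maxHeartbeats 3000000 in
lemma key3 (p n : ℝ) (A B : MP) :
    C (((n-p:ℝ)):ℂ) • (algD F2c (F1c p) (F0c p) A * pM p n * B)
      - C ((p:ℂ)) • (A * pM p n * adjD F2d (F1d p n) (F0d p n) B)
    = (-(C ((n:ℂ)) * X)) • Tm (U3 p n) (V3 p n) A B
        + (((1:Polynomial ℂ)) - X^2) • dM (Tm (U3 p n) (V3 p n) A B) := by
  refine Matrix.ext (fun i j => ?_)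
  fin_cases i <;> fin_cases j <;>
    · simp only [algD, adjD, Tm, U3, V3, F2c, F1c, F0c, F2d, F1d, F0d, pM, cM, dM,
        Matrix.mul_apply, Matrix.sub_apply, Matrix.add_apply, Matrix.smul_apply,
        Matrix.map_apply, Matrix.of_apply, Fin.sum_univ_two,
        Matrix.cons_val', Matrix.cons_val_zero, Matrix.cons_val_one,
        Matrix.head_cons, Matrix.head_fin_const, Matrix.empty_val',
        Matrix.cons_val_fin_one,
        Polynomial.map_add, Polynomial.map_mul, Polynomial.map_neg,
        Polynomial.map_pow, Polynomial.map_X, Polynomial.map_C,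
        Polynomial.map_one, Polynomial.map_zero, Polynomial.map_ofNat,
        Complex.conj_ofReal, Complex.ofReal_sub, Complex.ofReal_add,
        Complex.ofReal_mul, Complex.ofReal_ofNat, Complex.ofReal_one,
        Complex.ofReal_pow, Complex.ofReal_neg, Polynomial.map_sub,
        derivative_mul, derivative_add, derivative_sub, derivative_neg,
        derivative_C, derivative_X, derivative_X_pow, derivative_one,
        derivative_ofNat, map_zero, map_one, smul_eq_mul,
        map_add, map_sub, map_mul, map_neg, map_pow, map_ofNat,
        map_natCast, Nat.cast_ofNat, Nat.cast_one]
      push_cast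
      ring

lemma mderiv_evC (A : MP) : mderiv (fun t => evC A t) = fun x => evC (dM A) x := by
  funext x
  refine Matrix.ext fun i j => ?_
  show deriv (fun t : ℝ => evC A t i j) x = _
  have h : (fun t : ℝ => evC A t i j) = fun t : ℝ => (A i j).eval ((t:ℝ):ℂ) := rfl
  rw [h]
  exact (((A i j).hasDerivAt ((x:ℝ):ℂ)).comp_ofReal).deriv

lemma exists_rep (P : ℝ → Matrix (Fin 2) (Fin 2) ℂ) (hP : IsPolyMat P) :
    ∃ A : MP, P = fun x => evC A x := by
  refine ⟨Matrix.of fun i j => (hP i j).choose, ?_⟩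
  funext x
  refine Matrix.ext fun i j => ?_
  exact (hP i j).choose_spec x

lemma evC_F2a (x : ℝ) : evC F2a x = !![(x:ℂ) ^ 2, (x:ℂ); -(x:ℂ), -1] := by
  refine Matrix.ext fun i j => ?_
  fin_cases i <;> fin_cases j <;> simp [evC, F2a, Matrix.map_apply]

lemma evC_F1a (p n : ℝ) (x : ℝ) :
    evC (F1a p n) x = !![((n:ℂ) + 2) * (x:ℂ), (n:ℂ) - (p:ℂ) + 2; -(p:ℂ), 0] := by
  refine Matrix.ext fun i j => ?_
  fin_cases i <;> fin_cases j <;> simp [evC, F1a, Matrix.map_apply] <;> (push_cast; ring)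

lemma evC_F0a (p n : ℝ) (x : ℝ) :
    evC (F0a p n) x = !![(p:ℂ) * ((n:ℂ) - (p:ℂ) + 1), 0; 0, 0] := by
  refine Matrix.ext fun i j => ?_
  fin_cases i <;> fin_cases j <;> simp [evC, F0a, Matrix.map_apply] <;> (push_cast; ring)

lemma evC_F2b (x : ℝ) : evC F2b x = !![-1, -(x:ℂ); (x:ℂ), (x:ℂ) ^ 2] := by
  refine Matrix.ext fun i j => ?_
  fin_cases i <;> fin_cases j <;> simp [evC, F2b, Matrix.map_apply]

lemma evC_F1b (p n : ℝ) (x : ℝ) :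
    evC (F1b p n) x = !![0, (p:ℂ) - (n:ℂ); (p:ℂ) + 2, ((n:ℂ) + 2) * (x:ℂ)] := by
  refine Matrix.ext fun i j => ?_
  fin_cases i <;> fin_cases j <;> simp [evC, F1b, Matrix.map_apply] <;> (push_cast; ring)

lemma evC_F0b (p n : ℝ) (x : ℝ) :
    evC (F0b p n) x = !![0, 0; 0, ((p:ℂ) + 1) * ((n:ℂ) - (p:ℂ))] := by
  refine Matrix.ext fun i j => ?_
  fin_cases i <;> fin_cases j <;> simp [evC, F0b, Matrix.map_apply] <;> (push_cast; ring)

lemma evC_F2c (x : ℝ) : evC F2c x = !![-(x:ℂ), -1; (x:ℂ) ^ 2, (x:ℂ)] := by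
  refine Matrix.ext fun i j => ?_
  fin_cases i <;> fin_cases j <;> simp [evC, F2c, Matrix.map_apply]

lemma evC_F1c (p : ℝ) (x : ℝ) :
    evC (F1c p) x = !![-(p:ℂ), 0; 2 * ((p:ℂ) + 1) * (x:ℂ), (p:ℂ) + 2] := by
  refine Matrix.ext fun i j => ?_
  fin_cases i <;> fin_cases j <;> simp [evC, F1c, Matrix.map_apply] <;> (push_cast; ring)

lemma evC_F0c (p : ℝ) (x : ℝ) :
    evC (F0c p) x = !![0, 0; (p:ℂ) * ((p:ℂ) + 1), 0] := by
  refine Matrix.ext fun i j => ?_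
  fin_cases i <;> fin_cases j <;> simp [evC, F0c, Matrix.map_apply] <;> (push_cast; ring)

lemma evC_F2d (x : ℝ) : evC F2d x = !![(x:ℂ), (x:ℂ) ^ 2; -1, -(x:ℂ)] := by
  refine Matrix.ext fun i j => ?_
  fin_cases i <;> fin_cases j <;> simp [evC, F2d, Matrix.map_apply]

lemma evC_F1d (p n : ℝ) (x : ℝ) :
    evC (F1d p n) x = !![(n:ℂ) - (p:ℂ) + 2, 2 * ((n:ℂ) - (p:ℂ) + 1) * (x:ℂ);
                          0, (p:ℂ) - (n:ℂ)] := by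
  refine Matrix.ext fun i j => ?_
  fin_cases i <;> fin_cases j <;> simp [evC, F1d, Matrix.map_apply] <;> (push_cast; ring)

lemma evC_F0d (p n : ℝ) (x : ℝ) :
    evC (F0d p n) x = !![0, ((n:ℂ) - (p:ℂ)) * ((n:ℂ) - (p:ℂ) + 1); 0, 0] := by
  refine Matrix.ext fun i j => ?_
  fin_cases i <;> fin_cases j <;> simp [evC, F0d, Matrix.map_apply] <;> (push_cast; ring)

lemma actD1_evC (p n : ℝ) (A : MP) (x : ℝ) :
    actD1 p n (fun t => evC A t) x = evC (algD F2a (F1a p n) (F0a p n) A) x := by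
  rw [actD1, mderiv_evC, mderiv_evC]
  rw [algD, evC_add, evC_add, evC_mul, evC_mul, evC_mul, evC_F2a, evC_F1a, evC_F0a]

lemma actD2_evC (p n : ℝ) (A : MP) (x : ℝ) :
    actD2 p n (fun t => evC A t) x = evC (algD F2b (F1b p n) (F0b p n) A) x := by
  rw [actD2, mderiv_evC, mderiv_evC]
  rw [algD, evC_add, evC_add, evC_mul, evC_mul, evC_mul, evC_F2b, evC_F1b, evC_F0b]

lemma actD3_evC (p n : ℝ) (A : MP) (x : ℝ) :
    actD3 p n (fun t => evC A t) x = evC (algD F2c (F1c p) (F0c p) A) x := by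
  rw [actD3, mderiv_evC, mderiv_evC]
  rw [algD, evC_add, evC_add, evC_mul, evC_mul, evC_mul, evC_F2c, evC_F1c, evC_F0c]

lemma actD4_evC (p n : ℝ) (A : MP) (x : ℝ) :
    actD4 p n (fun t => evC A t) x = evC (algD F2d (F1d p n) (F0d p n) A) x := by
  rw [actD4, mderiv_evC, mderiv_evC]
  rw [algD, evC_add, evC_add, evC_mul, evC_mul, evC_mul, evC_F2d, evC_F1d, evC_F0d]

lemma Wmat_eq (p n : ℝ) (x : ℝ) :
    Wmat p n x = (((1 - x ^ 2) ^ (n / 2 - 1) : ℝ) : ℂ) • evC (pM p n) x := by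
  rw [Wmat]
  congr 1
  refine Matrix.ext fun i j => ?_
  fin_cases i <;> fin_cases j <;> simp [evC, pM, Matrix.map_apply] <;> (push_cast; ring)

lemma entry_eq (p n : ℝ) (A B : MP) (x : ℝ) (i j : Fin 2) :
    (evC A x * Wmat p n x * (evC B x)ᴴ) i j
      = (((1 - x ^ 2) ^ (n / 2 - 1) : ℝ) : ℂ) * ((A * pM p n * cM B) i j).eval (x:ℂ) := by
  rw [Wmat_eq, evC_conjT, Matrix.mul_smul, Matrix.smul_mul, Matrix.smul_apply,
    ← evC_mul, ← evC_mul, smul_eq_mul, evC_apply]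

lemma wInt (n : ℝ) (hn : 0 < n) :
    IntervalIntegrable (fun x : ℝ => (1 - x ^ 2) ^ (n / 2 - 1)) volume (-1) 1 := by
  have ha : (-1:ℝ) < n / 2 - 1 := by linarith
  have h01 : IntervalIntegrable (fun x : ℝ => (1 - x ^ 2) ^ (n / 2 - 1)) volume 0 1 := by
    have h1 : IntervalIntegrable (fun x : ℝ => (1 - x) ^ (n / 2 - 1)) volume 0 1 := by
      simpa using ((intervalIntegrable_rpow' (a := 0) (b := 1) ha).comp_sub_left 1).symm
    have h2 : ContinuousOn (fun x : ℝ => (1 + x) ^ (n / 2 - 1)) (Set.uIcc 0 1) := by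
      refine ContinuousOn.rpow_const ((continuous_const.add continuous_id).continuousOn) ?_
      intro x hx
      rw [Set.uIcc_of_le (by norm_num : (0:ℝ) ≤ 1)] at hx
      exact Or.inl (by nlinarith [hx.1, hx.2])
    refine (h1.mul_continuousOn h2).congr ?_
    intro x hx; dsimp only
    rw [Set.uIoc_of_le (by norm_num : (0:ℝ) ≤ 1)] at hx
    rw [← Real.mul_rpow (by nlinarith [hx.1, hx.2]) (by nlinarith [hx.1, hx.2])]
    congr 1
    ring
  have h10 : IntervalIntegrable (fun x : ℝ => (1 - x ^ 2) ^ (n / 2 - 1)) volume (-1) 0 := by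
    have h1 : IntervalIntegrable (fun x : ℝ => (1 + x) ^ (n / 2 - 1)) volume (-1) 0 := by
      simpa [add_comm] using (intervalIntegrable_rpow' (a := 0) (b := 1) ha).comp_add_right 1
    have h2 : ContinuousOn (fun x : ℝ => (1 - x) ^ (n / 2 - 1)) (Set.uIcc (-1) 0) := by
      refine ContinuousOn.rpow_const ((continuous_const.sub continuous_id).continuousOn) ?_
      intro x hx
      rw [Set.uIcc_of_le (by norm_num : (-1:ℝ) ≤ 0)] at hx
      exact Or.inl (by nlinarith [hx.1, hx.2])
    refine (h1.mul_continuousOn h2).congr ?_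
    intro x hx; dsimp only
    rw [Set.uIoc_of_le (by norm_num : (-1:ℝ) ≤ 0)] at hx
    rw [← Real.mul_rpow (by nlinarith [hx.1, hx.2]) (by nlinarith [hx.1, hx.2])]
    congr 1
    ring
  exact h10.trans h01

lemma wIntC (n : ℝ) (hn : 0 < n) (q : Polynomial ℂ) :
    IntervalIntegrable
      (fun x : ℝ => (((1 - x ^ 2) ^ (n / 2 - 1) : ℝ) : ℂ) * q.eval (x:ℂ))
      volume (-1) 1 := by
  have h1 : IntervalIntegrable
      (fun x : ℝ => (((1 - x ^ 2) ^ (n / 2 - 1) : ℝ) : ℂ)) volume (-1) 1 := by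
    have h := wInt n hn
    rw [intervalIntegrable_iff] at h ⊢
    exact h.ofReal
  exact h1.mul_continuousOn ((q.continuous.comp Complex.continuous_ofReal).continuousOn)

lemma integral_vanish (n : ℝ) (hn : 0 < n) (e t : Polynomial ℂ)
    (heq : e = -(C ((n:ℂ)) * X) * t + (((1:Polynomial ℂ)) - X ^ 2) * derivative t) :
    ∫ x in (-1:ℝ)..1, (((1 - x ^ 2) ^ (n / 2 - 1) : ℝ) : ℂ) * e.eval (x:ℂ) = 0 := by
  set g : ℝ → ℂ := fun x => (((1 - x ^ 2) ^ (n / 2) : ℝ) : ℂ) * t.eval (x:ℂ) with hgdef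
  have hcont : ContinuousOn g (Set.Icc (-1:ℝ) 1) := by
    refine Continuous.continuousOn (Continuous.mul ?_ ?_)
    · refine Complex.continuous_ofReal.comp ?_
      rw [continuous_iff_continuousAt]
      intro x
      exact (Real.continuousAt_rpow_const _ _ (Or.inr (by linarith))).comp
        (by fun_prop)
    · exact t.continuous.comp Complex.continuous_ofReal
  have hder : ∀ x ∈ Set.Ioo (-1:ℝ) 1,
      HasDerivAt g ((((1 - x ^ 2) ^ (n / 2 - 1) : ℝ) : ℂ) * e.eval (x:ℂ)) x := by
    intro x hx
    have h1x : (0:ℝ) < 1 - x ^ 2 := by nlinarith [hx.1, hx.2]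
    have hb : HasDerivAt (fun y : ℝ => 1 - y ^ 2) (-(2 * x)) x := by
      simpa using (hasDerivAt_pow 2 x).const_sub 1
    have hw : HasDerivAt (fun y : ℝ => (1 - y ^ 2) ^ (n / 2))
        (-(2 * x) * (n / 2) * (1 - x ^ 2) ^ (n / 2 - 1)) x :=
      hb.rpow_const (Or.inl h1x.ne')
    have hwC : HasDerivAt (fun y : ℝ => (((1 - y ^ 2) ^ (n / 2) : ℝ) : ℂ))
        (((-(2 * x) * (n / 2) * (1 - x ^ 2) ^ (n / 2 - 1) : ℝ)) : ℂ) x := hw.ofReal_comp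
    have ht : HasDerivAt (fun y : ℝ => t.eval ((y:ℝ):ℂ))
        ((derivative t).eval ((x:ℝ):ℂ)) x := (t.hasDerivAt ((x:ℝ):ℂ)).comp_ofReal
    have hmul := hwC.mul ht
    refine hmul.congr_deriv ?_
    have hsplit : ((1 - x ^ 2 : ℝ)) ^ (n / 2) = (1 - x ^ 2) ^ (n / 2 - 1) * (1 - x ^ 2) := by
      rw [show n / 2 = (n / 2 - 1) + 1 by ring, Real.rpow_add_one h1x.ne']
      norm_num
    rw [heq]
    simp only [Polynomial.eval_add, Polynomial.eval_mul, Polynomial.eval_neg,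
      Polynomial.eval_C, Polynomial.eval_X, Polynomial.eval_sub, Polynomial.eval_pow,
      Polynomial.eval_one, hsplit]
    push_cast
    ring
  have h0 := intervalIntegral.integral_eq_sub_of_hasDerivAt_of_le
    (by norm_num : (-1:ℝ) ≤ 1) hcont hder (wIntC n hn e)
  have hne : (n / 2 : ℝ) ≠ 0 := ne_of_gt (by linarith)
  have e1 : g 1 = 0 := by norm_num [hgdef, Real.zero_rpow hne]
  have e2 : g (-1) = 0 := by norm_num [hgdef, Real.zero_rpow hne]
  rw [h0, e1, e2, sub_zero]

lemma pair_integral (n c₁ c₂ : ℝ) (hn : 0 < n) (E₁ E₂ t : Polynomial ℂ)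
    (heq : C ((c₁:ℂ)) * E₁ - C ((c₂:ℂ)) * E₂
      = -(C ((n:ℂ)) * X) * t + (((1:Polynomial ℂ)) - X ^ 2) * derivative t) :
    ((c₁:ℂ)) * ∫ x in (-1:ℝ)..1, (((1 - x ^ 2) ^ (n / 2 - 1) : ℝ) : ℂ) * E₁.eval (x:ℂ)
      = ((c₂:ℂ)) * ∫ x in (-1:ℝ)..1, (((1 - x ^ 2) ^ (n / 2 - 1) : ℝ) : ℂ) * E₂.eval (x:ℂ) := by
  rw [← intervalIntegral.integral_const_mul, ← intervalIntegral.integral_const_mul,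
    ← sub_eq_zero,
    ← intervalIntegral.integral_sub ((wIntC n hn E₁).const_mul _) ((wIntC n hn E₂).const_mul _)]
  have hvan := integral_vanish n hn (C ((c₁:ℂ)) * E₁ - C ((c₂:ℂ)) * E₂) t heq
  rw [← hvan]
  refine intervalIntegral.integral_congr fun x _ => ?_
  simp only [Polynomial.eval_sub, Polynomial.eval_mul, Polynomial.eval_C]
  ring

end S18

/-- `D₁` and `D₂` are symmetric with respect to `W`, and the adjoint of
`D₃` is `(p/(n-p))·D₄`, i.e. `(n-p)·⟨P·D₃, Q⟩ = p·⟨P, Q·D₄⟩`. -/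
theorem statement18 (p n : ℝ) (hp : 0 < p) (hpn : p < n) :
    ∀ P Q : ℝ → Matrix (Fin 2) (Fin 2) ℂ, IsPolyMat P → IsPolyMat Q →
      mint p n (actD1 p n P) Q = mint p n P (actD1 p n Q) ∧
      mint p n (actD2 p n P) Q = mint p n P (actD2 p n Q) ∧
      ((n - p : ℝ) : ℂ) • mint p n (actD3 p n P) Q
        = (p : ℂ) • mint p n P (actD4 p n Q) := by
  classical
  intro P Q hP hQ
  obtain ⟨A, rfl⟩ := S18.exists_rep P hP
  obtain ⟨B0, rfl⟩ := S18.exists_rep Q hQ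
  have hn : 0 < n := hp.trans hpn
  set B : S18.MP := S18.cM B0 with hBdef
  refine ⟨?_, ?_, ?_⟩
  · -- case D1
    refine Matrix.ext fun i j => ?_
    have hL : ∀ x : ℝ,
        (actD1 p n (fun t => S18.evC A t) x * Wmat p n x * ((S18.evC B0 x))ᴴ) i j
          = (((1 - x ^ 2) ^ (n / 2 - 1) : ℝ) : ℂ)
              * (((S18.algD S18.F2a (S18.F1a p n) (S18.F0a p n) A) * S18.pM p n * B) i j).eval
                  (x:ℂ) := by
      intro x
      rw [S18.actD1_evC, S18.entry_eq]
    have hR : ∀ x : ℝ,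
        (S18.evC A x * Wmat p n x * ((actD1 p n (fun t => S18.evC B0 t) x))ᴴ) i j
          = (((1 - x ^ 2) ^ (n / 2 - 1) : ℝ) : ℂ)
              * ((A * S18.pM p n
                  * S18.adjD S18.F2a (S18.F1a p n) (S18.F0a p n) B) i j).eval (x:ℂ) := by
      intro x
      rw [S18.actD1_evC, S18.entry_eq, S18.cM_algD]
    have hkey := congrArg (fun M : S18.MP => M i j) (S18.key1 p n A B)
    simp only [Matrix.sub_apply, Matrix.add_apply, Matrix.smul_apply, smul_eq_mul] at hkey
    have heq : Polynomial.C ((1:ℝ):ℂ)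
          * ((S18.algD S18.F2a (S18.F1a p n) (S18.F0a p n) A) * S18.pM p n * B) i j
        - Polynomial.C ((1:ℝ):ℂ)
          * ((A * S18.pM p n * S18.adjD S18.F2a (S18.F1a p n) (S18.F0a p n) B) i j)
        = -(Polynomial.C ((n:ℂ)) * Polynomial.X) * (S18.Tm (S18.U1 p) (S18.V1 p n) A B i j)
          + (((1:Polynomial ℂ)) - Polynomial.X ^ 2)
            * Polynomial.derivative (S18.Tm (S18.U1 p) (S18.V1 p n) A B i j) := by
      simpa [S18.dM, Matrix.map_apply] using hkey
    have hfin := S18.pair_integral n 1 1 hn _ _ _ heq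
    simp only [Complex.ofReal_one, one_mul] at hfin
    show (∫ x in (-1:ℝ)..1, _) = (∫ x in (-1:ℝ)..1, _)
    rw [intervalIntegral.integral_congr (fun x _ => hL x),
      intervalIntegral.integral_congr (fun x _ => hR x)]
    exact hfin
  · -- case D2
    refine Matrix.ext fun i j => ?_
    have hL : ∀ x : ℝ,
        (actD2 p n (fun t => S18.evC A t) x * Wmat p n x * ((S18.evC B0 x))ᴴ) i j
          = (((1 - x ^ 2) ^ (n / 2 - 1) : ℝ) : ℂ)
              * (((S18.algD S18.F2b (S18.F1b p n) (S18.F0b p n) A) * S18.pM p n * B) i j).eval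
                  (x:ℂ) := by
      intro x
      rw [S18.actD2_evC, S18.entry_eq]
    have hR : ∀ x : ℝ,
        (S18.evC A x * Wmat p n x * ((actD2 p n (fun t => S18.evC B0 t) x))ᴴ) i j
          = (((1 - x ^ 2) ^ (n / 2 - 1) : ℝ) : ℂ)
              * ((A * S18.pM p n
                  * S18.adjD S18.F2b (S18.F1b p n) (S18.F0b p n) B) i j).eval (x:ℂ) := by
      intro x
      rw [S18.actD2_evC, S18.entry_eq, S18.cM_algD]
    have hkey := congrArg (fun M : S18.MP => M i j) (S18.key2 p n A B)
    simp only [Matrix.sub_apply, Matrix.add_apply, Matrix.smul_apply, smul_eq_mul] at hkey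
    have heq : Polynomial.C ((1:ℝ):ℂ)
          * ((S18.algD S18.F2b (S18.F1b p n) (S18.F0b p n) A) * S18.pM p n * B) i j
        - Polynomial.C ((1:ℝ):ℂ)
          * ((A * S18.pM p n * S18.adjD S18.F2b (S18.F1b p n) (S18.F0b p n) B) i j)
        = -(Polynomial.C ((n:ℂ)) * Polynomial.X) * (S18.Tm (S18.U2 p n) (S18.V2 p n) A B i j)
          + (((1:Polynomial ℂ)) - Polynomial.X ^ 2)
            * Polynomial.derivative (S18.Tm (S18.U2 p n) (S18.V2 p n) A B i j) := by
      simpa [S18.dM, Matrix.map_apply] using hkey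
    have hfin := S18.pair_integral n 1 1 hn _ _ _ heq
    simp only [Complex.ofReal_one, one_mul] at hfin
    show (∫ x in (-1:ℝ)..1, _) = (∫ x in (-1:ℝ)..1, _)
    rw [intervalIntegral.integral_congr (fun x _ => hL x),
      intervalIntegral.integral_congr (fun x _ => hR x)]
    exact hfin
  · -- case D3 / D4
    refine Matrix.ext fun i j => ?_
    have hL : ∀ x : ℝ,
        (actD3 p n (fun t => S18.evC A t) x * Wmat p n x * ((S18.evC B0 x))ᴴ) i j
          = (((1 - x ^ 2) ^ (n / 2 - 1) : ℝ) : ℂ)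
              * (((S18.algD S18.F2c (S18.F1c p) (S18.F0c p) A) * S18.pM p n * B) i j).eval
                  (x:ℂ) := by
      intro x
      rw [S18.actD3_evC, S18.entry_eq]
    have hR : ∀ x : ℝ,
        (S18.evC A x * Wmat p n x * ((actD4 p n (fun t => S18.evC B0 t) x))ᴴ) i j
          = (((1 - x ^ 2) ^ (n / 2 - 1) : ℝ) : ℂ)
              * ((A * S18.pM p n
                  * S18.adjD S18.F2d (S18.F1d p n) (S18.F0d p n) B) i j).eval (x:ℂ) := by
      intro x
      rw [S18.actD4_evC, S18.entry_eq, S18.cM_algD]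
    have hkey := congrArg (fun M : S18.MP => M i j) (S18.key3 p n A B)
    simp only [Matrix.sub_apply, Matrix.add_apply, Matrix.smul_apply, smul_eq_mul] at hkey
    have heq : Polynomial.C (((n - p : ℝ)):ℂ)
          * ((S18.algD S18.F2c (S18.F1c p) (S18.F0c p) A) * S18.pM p n * B) i j
        - Polynomial.C ((p:ℂ))
          * ((A * S18.pM p n * S18.adjD S18.F2d (S18.F1d p n) (S18.F0d p n) B) i j)
        = -(Polynomial.C ((n:ℂ)) * Polynomial.X) * (S18.Tm (S18.U3 p n) (S18.V3 p n) A B i j)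
          + (((1:Polynomial ℂ)) - Polynomial.X ^ 2)
            * Polynomial.derivative (S18.Tm (S18.U3 p n) (S18.V3 p n) A B i j) := by
      simpa [S18.dM, Matrix.map_apply] using hkey
    have hfin := S18.pair_integral n (n - p) p hn _ _ _ heq
    show ((n - p : ℝ) : ℂ) * (∫ x in (-1:ℝ)..1, _) = (p : ℂ) * (∫ x in (-1:ℝ)..1, _)
    rw [intervalIntegral.integral_congr (fun x _ => hL x),
      intervalIntegral.integral_congr (fun x _ => hR x)]
    exact hfin

end
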